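/- arXiv:0710.0080 — 9 statements merged into one kernel-verified Lean document; each statement's English description precedes it below -/
import Mathlib

section
/- If x, y ∈ X satisfy d^φ(x,y) ≠ d(x,y), then d^φ(x,y) ≥ 1/(2(1+d(m,x))). -/
/-- δ^φ(x,y) = min{d(x,y), 1/(1+d(m,x)) + φ(x,y) + 1/(1+d(m,y))}. -/
noncomputable def deltaPhi {X : Type*} [MetricSpace X] (m : X) (φ : X → X → ℝ) (x y : X) : ℝ :=
  min (dist x y) (1 / (1 + dist m x) + φ x y + 1 / (1 + dist m y))

/-- d^φ(x,y): infimum over finite chains x = x₀, ..., xₙ = y of Σ δ^φ(x_{i-1}, x_i). -/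
noncomputable def dPhi {X : Type*} [MetricSpace X] (m : X) (φ : X → X → ℝ) (x y : X) : ℝ :=
  sInf { r : ℝ | ∃ (n : ℕ) (f : ℕ → X), 1 ≤ n ∧ f 0 = x ∧ f n = y ∧
    r = ∑ i ∈ Finset.range n, deltaPhi m φ (f i) (f (i + 1)) }

lemma deltaPhi_nonneg {X : Type*} [MetricSpace X] (m : X) (φ : X → X → ℝ)
    (hφ : ∀ x y, 0 ≤ φ x y) (x y : X) : 0 ≤ deltaPhi m φ x y := by
  refine le_min dist_nonneg ?_
  have h1 : (0:ℝ) ≤ 1 / (1 + dist m x) := by positivity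
  have h2 : (0:ℝ) ≤ 1 / (1 + dist m y) := by positivity
  have := hφ x y
  linarith

lemma aux1 {X : Type*} [MetricSpace X] (m u v : X) :
    1 / (1 + dist m u) ≤ dist u v + 1 / (1 + dist m v) := by
  have htri : dist m v ≤ dist m u + dist u v := dist_triangle m u v
  have h2 : (0:ℝ) ≤ dist m u := dist_nonneg
  have h3 : (0:ℝ) ≤ dist m v := dist_nonneg
  have h4 : (0:ℝ) ≤ dist u v := dist_nonneg
  have p1 : (0:ℝ) < 1 + dist m u := by linarith
  have p2 : (0:ℝ) < 1 + dist m v := by linarith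
  have p3 : (0:ℝ) < 1 + dist m u + dist u v := by linarith
  have hmono : 1 / (1 + dist m u + dist u v) ≤ 1 / (1 + dist m v) :=
    one_div_le_one_div_of_le p2 (by linarith)
  have hkey : 1 / (1 + dist m u) - 1 / (1 + dist m u + dist u v)
      = dist u v / ((1 + dist m u) * (1 + dist m u + dist u v)) := by
    field_simp
    ring
  have hle : dist u v / ((1 + dist m u) * (1 + dist m u + dist u v)) ≤ dist u v := by
    apply div_le_self h4
    nlinarith
  linarith

lemma chain_bound {X : Type*} [MetricSpace X] (m : X) (φ : X → X → ℝ)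
    (hφ : ∀ x y, 0 ≤ φ x y) (f : ℕ → X) :
    ∀ n, min (dist (f 0) (f n)) (1 / (1 + dist m (f 0))) ≤
      ∑ i ∈ Finset.range n, deltaPhi m φ (f i) (f (i + 1)) := by
  intro n
  induction n with
  | zero => simp [dist_self]
  | succ n ih =>
    rw [Finset.sum_range_succ]
    set S := ∑ i ∈ Finset.range n, deltaPhi m φ (f i) (f (i + 1)) with hS
    have hδ : 0 ≤ deltaPhi m φ (f n) (f (n + 1)) := deltaPhi_nonneg m φ hφ _ _
    have hc : (0:ℝ) < 1 + dist m (f 0) := by have := dist_nonneg (x := m) (y := f 0); linarith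
    rcases le_or_gt (1 / (1 + dist m (f 0))) S with hcs | hcs
    · calc min (dist (f 0) (f (n + 1))) (1 / (1 + dist m (f 0)))
          ≤ 1 / (1 + dist m (f 0)) := min_le_right _ _
        _ ≤ S := hcs
        _ ≤ S + deltaPhi m φ (f n) (f (n + 1)) := by linarith
    · have hd : dist (f 0) (f n) ≤ S := by
        rcases min_le_iff.mp ih with h' | h'
        · exact h'
        · linarith
      rcases le_total (dist (f n) (f (n + 1)))
          (1 / (1 + dist m (f n)) + φ (f n) (f (n + 1)) + 1 / (1 + dist m (f (n + 1)))) with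
          hmin | hmin
      · have hδeq : deltaPhi m φ (f n) (f (n + 1)) = dist (f n) (f (n + 1)) :=
          min_eq_left hmin
        calc min (dist (f 0) (f (n + 1))) (1 / (1 + dist m (f 0)))
            ≤ dist (f 0) (f (n + 1)) := min_le_left _ _
          _ ≤ dist (f 0) (f n) + dist (f n) (f (n + 1)) := dist_triangle _ _ _
          _ ≤ S + deltaPhi m φ (f n) (f (n + 1)) := by rw [hδeq]; linarith
      · have hδeq : deltaPhi m φ (f n) (f (n + 1)) =
            1 / (1 + dist m (f n)) + φ (f n) (f (n + 1)) + 1 / (1 + dist m (f (n + 1))) :=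
          min_eq_right hmin
        have h1 : 1 / (1 + dist m (f n)) ≤ deltaPhi m φ (f n) (f (n + 1)) := by
          have h2 : (0:ℝ) ≤ 1 / (1 + dist m (f (n + 1))) := by positivity
          have := hφ (f n) (f (n + 1))
          rw [hδeq]; linarith
        have haux := aux1 m (f 0) (f n)
        calc min (dist (f 0) (f (n + 1))) (1 / (1 + dist m (f 0)))
            ≤ 1 / (1 + dist m (f 0)) := min_le_right _ _
          _ ≤ dist (f 0) (f n) + 1 / (1 + dist m (f n)) := haux
          _ ≤ S + deltaPhi m φ (f n) (f (n + 1)) := by linarith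

theorem stmt1 {X : Type*} [MetricSpace X] (m : X) (φ : X → X → ℝ)
    (hφ : ∀ x y, 0 ≤ φ x y) (hsym : ∀ x y, φ x y = φ y x)
    (x y : X) (h : dPhi m φ x y ≠ dist x y) :
    dPhi m φ x y ≥ 1 / (2 * (1 + dist m x)) := by
  have hc : (0:ℝ) < 1 + dist m x := by have := dist_nonneg (x := m) (y := x); linarith
  set S := { r : ℝ | ∃ (n : ℕ) (f : ℕ → X), 1 ≤ n ∧ f 0 = x ∧ f n = y ∧
    r = ∑ i ∈ Finset.range n, deltaPhi m φ (f i) (f (i + 1)) } with hSdef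
  have hmem : deltaPhi m φ x y ∈ S := by
    refine ⟨1, fun i => if i = 0 then x else y, le_rfl, by simp, by simp, by simp⟩
  have hbdd : BddBelow S := by
    refine ⟨0, fun r hr => ?_⟩
    obtain ⟨n, f, _, _, _, rfl⟩ := hr
    exact Finset.sum_nonneg fun i _ => deltaPhi_nonneg m φ hφ _ _
  have hle : dPhi m φ x y ≤ dist x y :=
    (csInf_le hbdd hmem).trans (min_le_left _ _)
  have hlt : dPhi m φ x y < dist x y := lt_of_le_of_ne hle h
  have hge : min (dist x y) (1 / (1 + dist m x)) ≤ dPhi m φ x y := by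
    refine le_csInf ⟨_, hmem⟩ ?_
    rintro r ⟨n, f, hn, h0, hn', rfl⟩
    have := chain_bound m φ hφ f n
    rw [h0, hn'] at this
    exact this
  have hfin : 1 / (1 + dist m x) ≤ dPhi m φ x y := by
    rcases min_le_iff.mp (le_refl (min (dist x y) (1 / (1 + dist m x)))) with _ | _
    all_goals {
      rcases le_total (dist x y) (1 / (1 + dist m x)) with h' | h'
      · rw [min_eq_left h'] at hge; linarith
      · rw [min_eq_right h'] at hge; exact hge
    }
  have h2 : 1 / (2 * (1 + dist m x)) ≤ 1 / (1 + dist m x) :=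
    one_div_le_one_div_of_le hc (by linarith)
  linarith
end

section
/- If d^φ(x,y) = 0 then x = y. -/
lemma chain_lb {X : Type*} [MetricSpace X] (m : X) (φ : X → X → ℝ)
    (hφ : ∀ x y, 0 ≤ φ x y) :
    ∀ (n : ℕ) (f : ℕ → X),
      min (dist (f 0) (f n)) (1 / (1 + dist m (f 0))) ≤
        ∑ i ∈ Finset.range n, deltaPhi m φ (f i) (f (i + 1)) := by
  intro n
  induction n with
  | zero =>
    intro f
    simp only [Finset.range_zero, Finset.sum_empty, dist_self]
    have : (0:ℝ) < 1 / (1 + dist m (f 0)) := by positivity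
    simp [min_le_iff]
  | succ n ih =>
    intro f
    have htail := ih (fun i => f (i + 1))
    rw [Finset.sum_range_succ']
    set a := dist (f 0) (f 1) with ha
    set b := dist (f 1) (f (n + 1)) with hb
    set c0 := 1 / (1 + dist m (f 0)) with hc0
    set c1 := 1 / (1 + dist m (f 1)) with hc1
    have hδ : min a c0 ≤ deltaPhi m φ (f 0) (f 1) := by
      unfold deltaPhi
      apply le_min
      · exact min_le_left _ _
      · refine le_trans (min_le_right _ _) ?_
        have := hφ (f 0) (f 1)
        have : (0:ℝ) < 1 + dist m (f 1) := by positivity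
        have h01 : (0:ℝ) ≤ 1 / (1 + dist m (f 1)) := by positivity
        nlinarith [hφ (f 0) (f 1)]
    have hD : dist (f 0) (f (n + 1)) ≤ a + b := dist_triangle _ _ _
    have hm1 : dist m (f 1) ≤ dist m (f 0) + a := dist_triangle _ _ _
    have ha0 : 0 ≤ a := dist_nonneg
    have hb0 : 0 ≤ b := dist_nonneg
    have hd0 : 0 ≤ dist m (f 0) := dist_nonneg
    have hd1 : 0 ≤ dist m (f 1) := dist_nonneg
    have key : min (dist (f 0) (f (n + 1))) c0 ≤ min b c1 + min a c0 := by
      rcases min_cases a c0 with ⟨h1, h2⟩ | ⟨h1, h2⟩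
      · rcases min_cases b c1 with ⟨h3, h4⟩ | ⟨h3, h4⟩
        · rw [h1, h3]
          exact le_trans (min_le_left _ _) (by linarith)
        · rw [h1, h3]
          have hc1val : c1 = 1 / (1 + dist m (f 1)) := hc1
          have hp0 : (0:ℝ) < 1 + dist m (f 0) := by positivity
          have hp1 : (0:ℝ) < 1 + dist m (f 1) := by positivity
          have : c0 ≤ c1 + a := by
            rw [hc0, hc1, div_add' _ _ _ (ne_of_gt hp1), div_le_div_iff₀ hp0 hp1]
            nlinarith [mul_nonneg ha0 hd0, mul_nonneg ha0 hd1, mul_nonneg (mul_nonneg ha0 hd1) hd0]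
          exact le_trans (min_le_right _ _) this
      · rw [h1]
        have h3 : 0 ≤ min b c1 := by
          have : (0:ℝ) ≤ c1 := by rw [hc1]; positivity
          exact le_min hb0 this
        exact le_trans (min_le_right _ _) (by linarith)
    calc min (dist (f 0) (f (n + 1))) c0 ≤ min b c1 + min a c0 := key
      _ ≤ (∑ i ∈ Finset.range n, deltaPhi m φ (f (i + 1)) (f (i + 1 + 1)))
            + deltaPhi m φ (f 0) (f 1) := add_le_add htail hδ

theorem stmt2 {X : Type*} [MetricSpace X] (m : X) (φ : X → X → ℝ)
    (hφ : ∀ x y, 0 ≤ φ x y) (hsym : ∀ x y, φ x y = φ y x)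
    (x y : X) (h : dPhi m φ x y = 0) : x = y := by
  by_contra hxy
  have hd : 0 < dist x y := dist_pos.mpr hxy
  have hc : (0:ℝ) < 1 / (1 + dist m x) := by positivity
  set ε := min (dist x y) (1 / (1 + dist m x)) with hε
  have hε0 : 0 < ε := lt_min hd hc
  set S := { r : ℝ | ∃ (n : ℕ) (f : ℕ → X), 1 ≤ n ∧ f 0 = x ∧ f n = y ∧
    r = ∑ i ∈ Finset.range n, deltaPhi m φ (f i) (f (i + 1)) } with hS
  have hne : S.Nonempty := by
    refine ⟨deltaPhi m φ x y, 1, fun i => if i = 0 then x else y, le_refl 1, rfl, rfl, ?_⟩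
    simp
  have hlb : ∀ r ∈ S, ε ≤ r := by
    rintro r ⟨n, f, hn, hf0, hfn, rfl⟩
    have := chain_lb m φ hφ n f
    rw [hf0, hfn] at this
    exact this
  have : ε ≤ dPhi m φ x y := le_csInf hne hlb
  rw [h] at this
  linarith
end

section
/- d^φ is a metric on X. -/
namespace DPhiAux

variable {X : Type*} [MetricSpace X] (m : X) (φ : X → X → ℝ)

/-- The weight function h(x) = 1/(1 + d(m,x)). -/
noncomputable def hw (m x : X) : ℝ := 1 / (1 + dist m x)

lemma hw_pos (x : X) : 0 < hw m x := by
  have : (0:ℝ) < 1 + dist m x := by linarith [dist_nonneg (x := m) (y := x)]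
  exact div_pos one_pos this

lemma hw_lip (x y : X) : hw m x ≤ hw m y + dist x y := by
  have hx : (0:ℝ) < 1 + dist m x := by linarith [dist_nonneg (x := m) (y := x)]
  have hy : (0:ℝ) < 1 + dist m y := by linarith [dist_nonneg (x := m) (y := y)]
  have htri : dist m y ≤ dist m x + dist x y := dist_triangle m x y
  unfold hw
  rw [div_add' _ _ _ (ne_of_gt hy), div_le_div_iff₀ hx hy]
  have d1 : (0:ℝ) ≤ dist x y := dist_nonneg
  have d2 : (0:ℝ) ≤ dist m x := dist_nonneg
  have d3 : (0:ℝ) ≤ dist m y := dist_nonneg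
  nlinarith [mul_nonneg d1 d2, mul_nonneg d1 d3, mul_nonneg (mul_nonneg d1 d2) d3]

/-- The comparison metric ρ(x,y) = min(d(x,y), h(x)+h(y)). -/
noncomputable def rho (m : X) (x y : X) : ℝ := min (dist x y) (hw m x + hw m y)

lemma rho_nonneg (x y : X) : 0 ≤ rho m x y :=
  le_min dist_nonneg (by linarith [hw_pos m x, hw_pos m y])

lemma rho_pos {x y : X} (h : x ≠ y) : 0 < rho m x y :=
  lt_min (dist_pos.mpr h) (by linarith [hw_pos m x, hw_pos m y])

lemma rho_self (x : X) : rho m x x = 0 :=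
  le_antisymm (le_trans (min_le_left _ _) (by simp)) (rho_nonneg m x x)

lemma rho_triangle (x y z : X) : rho m x z ≤ rho m x y + rho m y z := by
  rcases min_cases (dist x y) (hw m x + hw m y) with ⟨e1, h1⟩ | ⟨e1, h1⟩ <;>
    rcases min_cases (dist y z) (hw m y + hw m z) with ⟨e2, h2⟩ | ⟨e2, h2⟩ <;>
    unfold rho <;> rw [e1, e2]
  · exact le_trans (min_le_left _ _) (dist_triangle x y z)
  · refine le_trans (min_le_right _ _) ?_
    have := hw_lip m x y
    have := dist_comm x y
    linarith [hw_pos m y]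
  · refine le_trans (min_le_right _ _) ?_
    have := hw_lip m z y
    have := dist_comm y z
    linarith [hw_pos m y, hw_lip m z y]
  · refine le_trans (min_le_right _ _) ?_
    linarith [hw_pos m y]

lemma rho_chain (f : ℕ → X) (n : ℕ) :
    rho m (f 0) (f n) ≤ ∑ i ∈ Finset.range n, rho m (f i) (f (i + 1)) := by
  induction n with
  | zero => simp [rho_self]
  | succ n ih =>
      rw [Finset.sum_range_succ]
      calc rho m (f 0) (f (n + 1)) ≤ rho m (f 0) (f n) + rho m (f n) (f (n + 1)) :=
        rho_triangle m _ _ _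
      _ ≤ _ := by linarith

lemma rho_le_delta (hφ : ∀ x y, 0 ≤ φ x y) (x y : X) :
    rho m x y ≤ deltaPhi m φ x y := by
  refine min_le_min le_rfl ?_
  have := hφ x y
  unfold hw
  linarith

lemma delta_nonneg (hφ : ∀ x y, 0 ≤ φ x y) (x y : X) : 0 ≤ deltaPhi m φ x y := by
  refine le_min dist_nonneg ?_
  have := hφ x y
  have := hw_pos m x
  have := hw_pos m y
  unfold hw at *
  linarith

lemma delta_comm (hsym : ∀ x y, φ x y = φ y x) (x y : X) :
    deltaPhi m φ x y = deltaPhi m φ y x := by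
  unfold deltaPhi
  rw [dist_comm x y, hsym x y]
  congr 1
  ring

/-- The chain set. -/
def S (x y : X) : Set ℝ :=
  { r : ℝ | ∃ (n : ℕ) (f : ℕ → X), 1 ≤ n ∧ f 0 = x ∧ f n = y ∧
    r = ∑ i ∈ Finset.range n, deltaPhi m φ (f i) (f (i + 1)) }

lemma dPhi_eq (x y : X) : dPhi m φ x y = sInf (S m φ x y) := rfl

lemma S_nonempty (x y : X) : (S m φ x y).Nonempty := by
  refine ⟨deltaPhi m φ x y, 1, fun i => if i = 0 then x else y, le_rfl, by simp, by simp, ?_⟩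
  simp

lemma S_bddBelow (hφ : ∀ x y, 0 ≤ φ x y) (x y : X) : ∀ r ∈ S m φ x y, rho m x y ≤ r := by
  rintro r ⟨n, f, hn, h0, hN, rfl⟩
  calc rho m x y = rho m (f 0) (f n) := by rw [h0, hN]
  _ ≤ ∑ i ∈ Finset.range n, rho m (f i) (f (i + 1)) := rho_chain m f n
  _ ≤ ∑ i ∈ Finset.range n, deltaPhi m φ (f i) (f (i + 1)) :=
      Finset.sum_le_sum fun i _ => rho_le_delta m φ hφ _ _

lemma dPhi_ge_rho (hφ : ∀ x y, 0 ≤ φ x y) (x y : X) : rho m x y ≤ dPhi m φ x y :=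
  le_csInf (S_nonempty m φ x y) (S_bddBelow m φ hφ x y)

lemma dPhi_nonneg (hφ : ∀ x y, 0 ≤ φ x y) (x y : X) : 0 ≤ dPhi m φ x y :=
  le_trans (rho_nonneg m x y) (dPhi_ge_rho m φ hφ x y)

lemma bdd (hφ : ∀ x y, 0 ≤ φ x y) (x y : X) : BddBelow (S m φ x y) :=
  ⟨rho m x y, S_bddBelow m φ hφ x y⟩

lemma dPhi_le_delta (hφ : ∀ x y, 0 ≤ φ x y) (x y : X) :
    dPhi m φ x y ≤ deltaPhi m φ x y := by
  refine csInf_le (bdd m φ hφ x y) ?_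
  refine ⟨1, fun i => if i = 0 then x else y, le_rfl, by simp, by simp, ?_⟩
  simp

lemma S_rev (hsym : ∀ x y, φ x y = φ y x) (x y : X) {r : ℝ} (h : r ∈ S m φ x y) :
    r ∈ S m φ y x := by
  obtain ⟨n, f, hn, h0, hN, rfl⟩ := h
  refine ⟨n, fun i => f (n - i), hn, by simpa using hN, by simpa using h0, ?_⟩
  have key : ∀ i ∈ Finset.range n,
      deltaPhi m φ (f (n - i)) (f (n - (i + 1)))
        = deltaPhi m φ (f (n - 1 - i)) (f (n - 1 - i + 1)) := by
    intro i hi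
    have hi' : i < n := Finset.mem_range.mp hi
    have h1 : n - i = n - 1 - i + 1 := by omega
    have h2 : n - (i + 1) = n - 1 - i := by omega
    rw [h1, h2, delta_comm m φ hsym]
  rw [Finset.sum_congr rfl key,
    Finset.sum_range_reflect (fun i => deltaPhi m φ (f i) (f (i + 1))) n]

lemma S_concat {x y z : X} {a b : ℝ} (ha : a ∈ S m φ x y) (hb : b ∈ S m φ y z) :
    a + b ∈ S m φ x z := by
  obtain ⟨n, f, hn, hf0, hfn, rfl⟩ := ha
  obtain ⟨k, g, hk, hg0, hgk, rfl⟩ := hb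
  refine ⟨n + k, fun i => if i ≤ n then f i else g (i - n), by omega,
    by simp [hf0], ?_, ?_⟩
  · have : ¬ (n + k ≤ n) := by omega
    simp [this, hgk]
  · rw [Finset.sum_range_add]
    congr 1
    · apply Finset.sum_congr rfl
      intro i hi
      have hi' : i < n := Finset.mem_range.mp hi
      have h1 : i ≤ n := by omega
      have h2 : i + 1 ≤ n := by omega
      simp [h1, h2]
    · apply Finset.sum_congr rfl
      intro j hj
      have hj' : j < k := Finset.mem_range.mp hj
      have h2 : ¬ (n + j + 1 ≤ n) := by omega
      have e2 : n + j + 1 - n = j + 1 := by omega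
      rcases Nat.eq_zero_or_pos j with hj0 | hj0
      · subst hj0
        simp [h2, hfn, hg0]
      · have h1 : ¬ (n + j ≤ n) := by omega
        have e1 : n + j - n = j := by omega
        simp [h1, h2, e1, e2]

end DPhiAux

/-- d^φ is a metric on X: nonnegative, vanishing exactly on the diagonal,
symmetric, and satisfying the triangle inequality. -/
theorem stmt5 {X : Type*} [MetricSpace X] (m : X) (φ : X → X → ℝ)
    (hφ : ∀ x y, 0 ≤ φ x y) (hsym : ∀ x y, φ x y = φ y x) :
    (∀ x y, 0 ≤ dPhi m φ x y) ∧
    (∀ x y, dPhi m φ x y = 0 ↔ x = y) ∧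
    (∀ x y, dPhi m φ x y = dPhi m φ y x) ∧
    (∀ x y z, dPhi m φ x z ≤ dPhi m φ x y + dPhi m φ y z) := by
  open DPhiAux in
  refine ⟨dPhi_nonneg m φ hφ, ?_, ?_, ?_⟩
  · intro x y
    constructor
    · intro h
      by_contra hne
      have := DPhiAux.dPhi_ge_rho m φ hφ x y
      have := DPhiAux.rho_pos m (x := x) (y := y) hne
      linarith
    · rintro rfl
      refine le_antisymm ?_ (DPhiAux.dPhi_nonneg m φ hφ x x)
      have h := DPhiAux.dPhi_le_delta m φ hφ x x
      have h2 : deltaPhi m φ x x ≤ 0 := by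
        refine le_trans (min_le_left _ _) ?_
        simp
      linarith
  · intro x y
    apply le_antisymm
    · exact le_csInf (DPhiAux.S_nonempty m φ y x)
        fun r hr => csInf_le (DPhiAux.bdd m φ hφ x y) (DPhiAux.S_rev m φ hsym y x hr)
    · exact le_csInf (DPhiAux.S_nonempty m φ x y)
        fun r hr => csInf_le (DPhiAux.bdd m φ hφ y x) (DPhiAux.S_rev m φ hsym x y hr)
  · intro x y z
    refine le_of_forall_pos_le_add ?_
    intro ε hε
    obtain ⟨a, ha, ha'⟩ := Real.lt_sInf_add_pos (DPhiAux.S_nonempty m φ x y) (half_pos hε)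
    obtain ⟨b, hb, hb'⟩ := Real.lt_sInf_add_pos (DPhiAux.S_nonempty m φ y z) (half_pos hε)
    have hmem := DPhiAux.S_concat m φ ha hb
    have h1 : dPhi m φ x z ≤ a + b := csInf_le (DPhiAux.bdd m φ hφ x z) hmem
    have e1 : dPhi m φ x y = sInf (DPhiAux.S m φ x y) := rfl
    have e2 : dPhi m φ y z = sInf (DPhiAux.S m φ y z) := rfl
    rw [e1, e2]
    linarith
end

section
/- For every x ∈ X, the open ball B_x = {y ∈ X : d^φ(y,x) < 1/(8(1+d(m,x)))} in (X, d^φ) satisfies: for all y, z ∈ B_x, d^φ(y,z) = d(y,z). -/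
section aux
variable {X : Type*} [MetricSpace X] (m : X) (φ : X → X → ℝ)
  (hφ : ∀ x y, 0 ≤ φ x y) (hsym : ∀ x y, φ x y = φ y x)

lemma one_add_dist_pos (a b : X) : (0:ℝ) < 1 + dist a b := by
  have := dist_nonneg (x := a) (y := b); linarith

include hφ in
lemma deltaPhi_nonneg_s6 (a b : X) : 0 ≤ deltaPhi m φ a b := by
  refine le_min dist_nonneg ?_
  have h1 : (0:ℝ) < 1 / (1 + dist m a) := by positivity
  have h2 : (0:ℝ) < 1 / (1 + dist m b) := by positivity
  have := hφ a b; linarith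

lemma deltaPhi_le_dist (a b : X) : deltaPhi m φ a b ≤ dist a b := min_le_left _ _

include hsym in
lemma deltaPhi_symm (a b : X) : deltaPhi m φ a b = deltaPhi m φ b a := by
  unfold deltaPhi
  rw [dist_comm a b, hsym a b]
  ring_nf

include hφ in
lemma dPhi_bddBelow (a b : X) :
    BddBelow { r : ℝ | ∃ (n : ℕ) (f : ℕ → X), 1 ≤ n ∧ f 0 = a ∧ f n = b ∧
      r = ∑ i ∈ Finset.range n, deltaPhi m φ (f i) (f (i + 1)) } := by
  refine ⟨0, fun r hr => ?_⟩
  obtain ⟨n, f, _, _, _, hr⟩ := hr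
  rw [hr]
  exact Finset.sum_nonneg fun i _ => deltaPhi_nonneg_s6 m φ hφ _ _

lemma dPhi_set_nonempty (a b : X) :
    (deltaPhi m φ a b) ∈ { r : ℝ | ∃ (n : ℕ) (f : ℕ → X), 1 ≤ n ∧ f 0 = a ∧ f n = b ∧
      r = ∑ i ∈ Finset.range n, deltaPhi m φ (f i) (f (i + 1)) } := by
  refine ⟨1, fun i => if i = 0 then a else b, le_refl 1, by simp, by simp, ?_⟩
  simp

include hφ in
lemma dPhi_le_dist (a b : X) : dPhi m φ a b ≤ dist a b :=
  le_trans (csInf_le (dPhi_bddBelow m φ hφ a b) (dPhi_set_nonempty m φ a b))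
    (deltaPhi_le_dist m φ a b)

include hsym in
lemma dPhi_symm (a b : X) : dPhi m φ a b = dPhi m φ b a := by
  unfold dPhi
  congr 1
  ext r
  constructor <;> rintro ⟨n, f, hn, h0, hn', hr⟩
  · refine ⟨n, fun i => f (n - i), hn, by simp [hn'], by simp [h0], ?_⟩
    rw [hr, ← Finset.sum_range_reflect]
    refine Finset.sum_congr rfl fun i hi => ?_
    rw [Finset.mem_range] at hi
    simp only
    rw [show n - 1 - i + 1 = n - i from by omega, deltaPhi_symm m φ hsym]
    congr 2
    omega
  · refine ⟨n, fun i => f (n - i), hn, by simp [hn'], by simp [h0], ?_⟩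
    rw [hr, ← Finset.sum_range_reflect]
    refine Finset.sum_congr rfl fun i hi => ?_
    rw [Finset.mem_range] at hi
    simp only
    rw [show n - 1 - i + 1 = n - i from by omega, deltaPhi_symm m φ hsym]
    congr 2
    omega

include hφ in
/-- Key chain estimate: every partial chain sum starting at `f 0` is at least
`min (dist (f 0) (f n)) (1/(2(1+d(m, f 0))))`. -/
lemma chain_lower (f : ℕ → X) (n : ℕ) :
    min (dist (f 0) (f n)) (1 / (2 * (1 + dist m (f 0)))) ≤
      ∑ i ∈ Finset.range n, deltaPhi m φ (f i) (f (i + 1)) := by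
  set c : ℝ := 1 + dist m (f 0) with hc
  have hc1 : (1:ℝ) ≤ c := by have := dist_nonneg (x := m) (y := f 0); simp [hc]
  have hcpos : (0:ℝ) < c := by linarith
  induction n with
  | zero => simp
  | succ n ih =>
    rw [Finset.sum_range_succ]
    set S := ∑ i ∈ Finset.range n, deltaPhi m φ (f i) (f (i + 1)) with hS
    have hδ0 : 0 ≤ deltaPhi m φ (f n) (f (n + 1)) := deltaPhi_nonneg_s6 m φ hφ _ _
    by_cases hcase : 1 / (2 * c) ≤ S
    · calc min (dist (f 0) (f (n+1))) (1 / (2 * c)) ≤ 1 / (2 * c) := min_le_right _ _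
        _ ≤ S + deltaPhi m φ (f n) (f (n + 1)) := by linarith
    · push_neg at hcase
      have ht : dist (f 0) (f n) ≤ S := by
        rcases le_or_gt (dist (f 0) (f n)) (1 / (2 * c)) with h | h
        · rw [min_eq_left h] at ih; exact ih
        · exfalso; have := ih; rw [min_eq_right h.le] at this; linarith
      have hδ : min (dist (f n) (f (n + 1))) (1 / (1 + dist m (f n)))
          ≤ deltaPhi m φ (f n) (f (n + 1)) := by
        refine min_le_min le_rfl ?_
        have h1 : (0:ℝ) < 1 / (1 + dist m (f (n+1))) := by positivity
        have := hφ (f n) (f (n+1)); linarith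
      rcases min_le_iff.mp hδ with h | h
      · calc min (dist (f 0) (f (n+1))) (1 / (2 * c)) ≤ dist (f 0) (f (n+1)) :=
              min_le_left _ _
          _ ≤ dist (f 0) (f n) + dist (f n) (f (n+1)) := dist_triangle _ _ _
          _ ≤ S + deltaPhi m φ (f n) (f (n + 1)) := by linarith
      · -- shortcut case
        have hdm : dist m (f n) ≤ dist m (f 0) + dist (f 0) (f n) := dist_triangle _ _ _
        have ht' : dist (f 0) (f n) < 1 / (2 * c) := lt_of_le_of_lt ht hcase
        have hle2c : 1 + dist m (f n) ≤ 2 * c := by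
          have h12c : 1 / (2 * c) ≤ c := by
            rw [div_le_iff₀ (by linarith)]
            nlinarith
          have : dist (f 0) (f n) ≤ c := le_trans ht'.le h12c
          simp only [hc] at *
          linarith
        have hpos : (0:ℝ) < 1 + dist m (f n) := one_add_dist_pos _ _
        have hfrac : 1 / (2 * c) ≤ 1 / (1 + dist m (f n)) :=
          one_div_le_one_div_of_le hpos hle2c
        have hS0 : 0 ≤ S := le_trans dist_nonneg ht
        calc min (dist (f 0) (f (n+1))) (1 / (2 * c)) ≤ 1 / (2 * c) := min_le_right _ _
          _ ≤ 1 / (1 + dist m (f n)) := hfrac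
          _ ≤ S + deltaPhi m φ (f n) (f (n + 1)) := by linarith
include hφ in
/-- The key Lemma. -/
lemma dPhi_lower (a b : X) :
    min (dist a b) (1 / (2 * (1 + dist m a))) ≤ dPhi m φ a b := by
  refine le_csInf ⟨_, dPhi_set_nonempty m φ a b⟩ ?_
  rintro r ⟨n, f, hn, h0, hn', hr⟩
  rw [hr]
  have := chain_lower m φ hφ f n
  rw [h0, hn'] at this
  exact this

include hφ in
lemma dist_small (a b : X) (h : dPhi m φ a b < 1 / (2 * (1 + dist m a))) :
    dist a b ≤ dPhi m φ a b := by
  have := dPhi_lower m φ hφ a b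
  rcases min_le_iff.mp this with h' | h'
  · exact h'
  · linarith

end aux

theorem stmt6 {X : Type*} [MetricSpace X] (m : X) (φ : X → X → ℝ)
    (hφ : ∀ x y, 0 ≤ φ x y) (hsym : ∀ x y, φ x y = φ y x)
    (x : X) :
    ∀ y z, dPhi m φ y x < 1 / (8 * (1 + dist m x)) →
      dPhi m φ z x < 1 / (8 * (1 + dist m x)) →
      dPhi m φ y z = dist y z := by
  intro y z hy hz
  set c : ℝ := 1 + dist m x with hc
  have hc1 : (1:ℝ) ≤ c := by have := dist_nonneg (x := m) (y := x); simp [hc]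
  have hcpos : (0:ℝ) < c := by linarith
  have h82 : 1 / (8 * c) < 1 / (2 * c) := by
    apply div_lt_div_of_pos_left one_pos (by linarith) (by linarith)
  -- translate to base point x
  have hxy : dPhi m φ x y < 1 / (2 * c) := by
    rw [dPhi_symm m φ hsym]; linarith
  have hxz : dPhi m φ x z < 1 / (2 * c) := by
    rw [dPhi_symm m φ hsym]; linarith
  have hdxy : dist x y < 1 / (8 * c) := by
    have h1 := dist_small m φ hφ x y hxy
    rw [dPhi_symm m φ hsym x y] at h1
    linarith
  have hdxz : dist x z < 1 / (8 * c) := by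
    have h1 := dist_small m φ hφ x z hxz
    rw [dPhi_symm m φ hsym x z] at h1
    linarith
  have hsum : 1 / (8 * c) + 1 / (8 * c) = 1 / (4 * c) := by
    field_simp
    ring
  have hdyz : dist y z < 1 / (4 * c) := by
    have := dist_triangle y x z
    rw [dist_comm y x] at this
    linarith
  have hle := dPhi_le_dist m φ hφ y z
  by_contra hne
  have hlt : dPhi m φ y z < dist y z := lt_of_le_of_ne hle hne
  have hmin := dPhi_lower m φ hφ y z
  have h2 : 1 / (2 * (1 + dist m y)) ≤ dPhi m φ y z := by
    rcases min_le_iff.mp hmin with h | h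
    · linarith
    · exact h
  have hdmy : dist m y ≤ dist m x + dist x y := dist_triangle _ _ _
  have h8c : 1 / (8 * c) ≤ c := by
    rw [div_le_iff₀ (by linarith)]
    nlinarith
  have hle4c : 2 * (1 + dist m y) ≤ 4 * c := by
    simp only [hc] at *
    linarith
  have hpos : (0:ℝ) < 2 * (1 + dist m y) := by
    have := dist_nonneg (x := m) (y := y); linarith
  have h4 : 1 / (4 * c) ≤ 1 / (2 * (1 + dist m y)) :=
    one_div_le_one_div_of_le hpos hle4c
  linarith
end

section
/- The identity map from (X, d^φ) to (X, d) is a homeomorphism; that is, the metrics d^φ and d are topologically equivalent. -/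
/-- The identity map from (X, d^φ) to (X, d) is a homeomorphism: the
identity is continuous in both directions, expressed by ε-δ conditions. -/
theorem stmt7 {X : Type*} [MetricSpace X] (m : X) (φ : X → X → ℝ)
    (hφ : ∀ x y, 0 ≤ φ x y) (hsym : ∀ x y, φ x y = φ y x) :
    (∀ x : X, ∀ ε > (0 : ℝ), ∃ δ > (0 : ℝ), ∀ y, dist x y < δ → dPhi m φ x y < ε) ∧
    (∀ x : X, ∀ ε > (0 : ℝ), ∃ δ > (0 : ℝ), ∀ y, dPhi m φ x y < δ → dist x y < ε) := by
  have hδ0 : ∀ x y : X, 0 ≤ deltaPhi m φ x y := by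
    intro x y
    refine le_min dist_nonneg ?_
    have h1 : (0:ℝ) ≤ 1 / (1 + dist m x) := by positivity
    have h2 : (0:ℝ) ≤ 1 / (1 + dist m y) := by positivity
    linarith [hφ x y]
  have hbdd : ∀ x y : X, BddBelow { r : ℝ | ∃ (n : ℕ) (f : ℕ → X), 1 ≤ n ∧ f 0 = x ∧ f n = y ∧
      r = ∑ i ∈ Finset.range n, deltaPhi m φ (f i) (f (i + 1)) } := by
    intro x y
    refine ⟨0, ?_⟩
    rintro r ⟨n, f, -, -, -, rfl⟩
    exact Finset.sum_nonneg fun i _ => hδ0 _ _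
  have hmem : ∀ x y : X, deltaPhi m φ x y ∈ { r : ℝ | ∃ (n : ℕ) (f : ℕ → X), 1 ≤ n ∧ f 0 = x ∧ f n = y ∧
      r = ∑ i ∈ Finset.range n, deltaPhi m φ (f i) (f (i + 1)) } := by
    intro x y
    exact ⟨1, fun i => if i = 0 then x else y, le_refl 1, by simp, by simp, by simp⟩
  constructor
  · intro x ε hε
    refine ⟨ε, hε, fun y hy => ?_⟩
    calc dPhi m φ x y ≤ deltaPhi m φ x y := csInf_le (hbdd x y) (hmem x y)
      _ ≤ dist x y := min_le_left _ _
      _ < ε := hy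
  · intro x ε hε
    set c : ℝ := 1 / (1 + dist m x + ε) with hc
    have hc0 : 0 < c := by
      have := dist_nonneg (x := m) (y := x)
      positivity
    refine ⟨min ε c, lt_min hε hc0, fun y hy => ?_⟩
    obtain ⟨r, hr, hrlt⟩ := exists_lt_of_csInf_lt ⟨_, hmem x y⟩ hy
    obtain ⟨n, f, hn, hf0, hfn, rfl⟩ := hr
    have key : ∀ k, k ≤ n → dist x (f k) ≤ ∑ i ∈ Finset.range k, deltaPhi m φ (f i) (f (i+1)) := by
      intro k hk
      induction k with
      | zero => simp [hf0]
      | succ k ih =>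
        have hklt : k < n := Nat.lt_of_succ_le hk
        have hpart := ih (le_of_lt hklt)
        have hPle : ∑ i ∈ Finset.range k, deltaPhi m φ (f i) (f (i+1)) ≤
            ∑ i ∈ Finset.range n, deltaPhi m φ (f i) (f (i+1)) :=
          Finset.sum_le_sum_of_subset_of_nonneg
            (Finset.range_subset_range.mpr (le_of_lt hklt)) (fun i _ _ => hδ0 _ _)
        have hxfk : dist x (f k) < ε :=
          lt_of_le_of_lt (hpart.trans hPle) (hrlt.trans_le (min_le_left _ _))
        have hmfk : dist m (f k) < dist m x + ε := by
          have := dist_triangle m x (f k)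
          linarith
        have hcle : c ≤ 1 / (1 + dist m (f k)) := by
          rw [hc]
          apply one_div_le_one_div_of_le
          · have := dist_nonneg (x := m) (y := f k)
            linarith
          · linarith
        have hshort : c ≤ 1 / (1 + dist m (f k)) + φ (f k) (f (k+1)) + 1 / (1 + dist m (f (k+1))) := by
          have h1 := hφ (f k) (f (k+1))
          have h2 : (0:ℝ) ≤ 1 / (1 + dist m (f (k+1))) := by positivity
          linarith
        have hterm_le : deltaPhi m φ (f k) (f (k+1)) ≤
            ∑ i ∈ Finset.range n, deltaPhi m φ (f i) (f (i+1)) :=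
          Finset.single_le_sum (f := fun i => deltaPhi m φ (f i) (f (i+1))) (fun i _ => hδ0 _ _) (Finset.mem_range.mpr hklt)
        have hterm_lt : deltaPhi m φ (f k) (f (k+1)) < c :=
          lt_of_le_of_lt hterm_le (hrlt.trans_le (min_le_right _ _))
        have heq : deltaPhi m φ (f k) (f (k+1)) = dist (f k) (f (k+1)) := by
          unfold deltaPhi
          unfold deltaPhi at hterm_lt
          rcases min_lt_iff.mp (lt_of_lt_of_le hterm_lt hshort) with h | h
          · exact min_eq_left (le_of_lt h)
          · exact absurd h (lt_irrefl _)
        calc dist x (f (k+1)) ≤ dist x (f k) + dist (f k) (f (k+1)) := dist_triangle _ _ _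
          _ ≤ (∑ i ∈ Finset.range k, deltaPhi m φ (f i) (f (i+1))) + deltaPhi m φ (f k) (f (k+1)) := by
              rw [heq] at *; linarith
          _ = ∑ i ∈ Finset.range (k+1), deltaPhi m φ (f i) (f (i+1)) := (Finset.sum_range_succ _ _).symm
    have hfin := key n le_rfl
    rw [hfn] at hfin
    exact lt_of_le_of_lt hfin (hrlt.trans_le (min_le_left _ _))
end

section
/- If y ∈ X satisfies d^φ(y,x) < 1/(8(1+d(m,x))), then d(m,y) < 1 + 2·d(m,x). -/
lemma key_chain {X : Type*} [MetricSpace X] (m : X) (φ : X → X → ℝ)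
    (hφ : ∀ x y, 0 ≤ φ x y) (R : ℝ) (hR0 : 0 ≤ R) :
    ∀ (n : ℕ) (f : ℕ → X), dist m (f n) ≤ R →
      (dist m (f 0) ≤ dist m (f n) + ∑ i ∈ Finset.range n, deltaPhi m φ (f i) (f (i+1)) ∨
        1/(8*(1+R)) ≤ ∑ i ∈ Finset.range n, deltaPhi m φ (f i) (f (i+1))) := by
  intro n
  induction n with
  | zero => intro f hf; left; simp
  | succ n ih =>
    intro f hf
    set g : ℕ → X := fun i => f (i+1) with hg
    have hsum : ∑ i ∈ Finset.range (n+1), deltaPhi m φ (f i) (f (i+1))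
        = (∑ i ∈ Finset.range n, deltaPhi m φ (g i) (g (i+1))) + deltaPhi m φ (f 0) (f 1) := by
      rw [Finset.sum_range_succ']
    have hgn : dist m (g n) ≤ R := hf
    have hδ0 : 0 ≤ deltaPhi m φ (f 0) (f 1) := deltaPhi_nonneg m φ hφ _ _
    have hSg : 0 ≤ ∑ i ∈ Finset.range n, deltaPhi m φ (g i) (g (i+1)) :=
      Finset.sum_nonneg (fun i _ => deltaPhi_nonneg m φ hφ _ _)
    have hpos : (0:ℝ) < 8*(1+R) := by linarith
    rcases ih g hgn with h1 | h1
    · by_cases hc : 1/(8*(1+R)) ≤ ∑ i ∈ Finset.range n, deltaPhi m φ (g i) (g (i+1))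
      · right; rw [hsum]; linarith
      push_neg at hc
      rcases le_total (dist (f 0) (f 1))
          (1 / (1 + dist m (f 0)) + φ (f 0) (f 1) + 1 / (1 + dist m (f 1))) with hmin | hmin
      · -- δ₀ = dist (f 0) (f 1)
        left
        have hδeq : deltaPhi m φ (f 0) (f 1) = dist (f 0) (f 1) := min_eq_left hmin
        have htri : dist m (f 0) ≤ dist m (f 1) + dist (f 0) (f 1) := by
          have := dist_triangle m (f 1) (f 0)
          rw [dist_comm (f 1) (f 0)] at this
          exact this
        have h1' : dist m (f 1) ≤ dist m (f (n+1)) +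
            ∑ i ∈ Finset.range n, deltaPhi m φ (g i) (g (i+1)) := h1
        rw [hsum, hδeq]
        linarith
      · -- δ₀ = shortcut
        right
        have hδeq : deltaPhi m φ (f 0) (f 1) =
            1 / (1 + dist m (f 0)) + φ (f 0) (f 1) + 1 / (1 + dist m (f 1)) :=
          min_eq_right hmin
        have hc1 : 1/(8*(1+R)) ≤ 1 := by
          rw [div_le_one hpos]; linarith
        have hf1 : dist m (f 1) ≤ R + 1 := by
          have h1' : dist m (f 1) ≤ dist m (g n) +
            ∑ i ∈ Finset.range n, deltaPhi m φ (g i) (g (i+1)) := h1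
          linarith
        have hx : (0:ℝ) < 1 + dist m (f 0) := by
          linarith [dist_nonneg (x := m) (y := f 0)]
        have hy : (0:ℝ) < 1 + dist m (f 1) := by
          linarith [dist_nonneg (x := m) (y := f 1)]
        have hstep : 1/(8*(1+R)) ≤ 1/(1 + dist m (f 1)) := by
          apply one_div_le_one_div_of_le hy
          linarith
        have h1x : (0:ℝ) ≤ 1/(1 + dist m (f 0)) := by positivity
        have hφ0 := hφ (f 0) (f 1)
        rw [hsum, hδeq]
        linarith
    · right; rw [hsum]; linarith

theorem stmt8 {X : Type*} [MetricSpace X] (m : X) (φ : X → X → ℝ)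
    (hφ : ∀ x y, 0 ≤ φ x y) (hsym : ∀ x y, φ x y = φ y x)
    (x y : X) (h : dPhi m φ y x < 1 / (8 * (1 + dist m x))) :
    dist m y < 1 + 2 * dist m x := by
  set R := dist m x with hRdef
  have hR0 : 0 ≤ R := dist_nonneg
  have hpos : (0:ℝ) < 8*(1+R) := by linarith
  set S := { r : ℝ | ∃ (n : ℕ) (f : ℕ → X), 1 ≤ n ∧ f 0 = y ∧ f n = x ∧
    r = ∑ i ∈ Finset.range n, deltaPhi m φ (f i) (f (i + 1)) } with hSdef
  have hne : S.Nonempty := by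
    refine ⟨deltaPhi m φ y x, 1, fun i => if i = 0 then y else x, le_refl 1, by simp, by simp, ?_⟩
    simp [Finset.sum_range_one]
  have hbdd : BddBelow S := by
    refine ⟨0, fun r hr => ?_⟩
    obtain ⟨n, f, hn, hf0, hfn, hreq⟩ := hr
    rw [hreq]
    exact Finset.sum_nonneg (fun i _ => deltaPhi_nonneg m φ hφ _ _)
  have h' : sInf S < 1 / (8 * (1 + R)) := h
  obtain ⟨r, hrS, hrlt⟩ := (csInf_lt_iff hbdd hne).mp h'
  obtain ⟨n, f, hn, hf0, hfn, hreq⟩ := hrS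
  have hfnR : dist m (f n) ≤ R := by rw [hfn]
  rcases key_chain m φ hφ R hR0 n f hfnR with hcase | hcase
  · have hc18 : 1/(8*(1+R)) ≤ 1/8 := by
      rw [div_le_div_iff₀ hpos (by norm_num)]; linarith
    rw [hf0] at hcase
    rw [hfn] at hcase
    rw [← hreq] at hcase
    linarith
  · rw [← hreq] at hcase
    linarith
end

section
/- With aₘ = 1 + 1/2 + ... + 1/m and the function φ for the standard compactification of ℝˢ (s ≥ 2), for every unit vector x the sequence (aᵢ·x)ᵢ is a Cauchy sequence in (ℝˢ, d^φ). -/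
/-- aₘ = 1 + 1/2 + ⋯ + 1/m. -/
noncomputable def harm (m : ℕ) : ℝ := ∑ k ∈ Finset.range m, (1 : ℝ) / (k + 1)

-- The function φ for the standard compactification of ℝˢ:
-- φ(x,y) = 0 if y = (a_q/a_p) x for some p,q ≥ 1; φ(x,y) = (1/aₘ)|x−y| if x,y
-- lie on the sphere Sₘ of radius aₘ (note ‖x‖ = aₘ there); |x−y| otherwise.
open Classical in
noncomputable def phiStd (s : ℕ) (x y : EuclideanSpace ℝ (Fin s)) : ℝ :=
  if ∃ p q : ℕ, 1 ≤ p ∧ 1 ≤ q ∧ y = (harm q / harm p) • x then 0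
  else if ∃ m : ℕ, 1 ≤ m ∧ ‖x‖ = harm m ∧ ‖y‖ = harm m then (1 / ‖x‖) * ‖x - y‖
  else ‖x - y‖


lemma harm_nonneg (m : ℕ) : 0 ≤ harm m := by
  unfold harm
  exact Finset.sum_nonneg fun k _ => by positivity

lemma harm_pos {m : ℕ} (hm : 1 ≤ m) : 0 < harm m := by
  unfold harm
  apply Finset.sum_pos (fun k _ => by positivity)
  exact ⟨0, Finset.mem_range.mpr hm⟩

lemma harm_mono : Monotone harm := by
  intro a b hab
  unfold harm
  exact Finset.sum_le_sum_of_subset_of_nonneg (Finset.range_subset_range.mpr hab)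
    (fun k _ _ => by positivity)

lemma phiStd_nonneg (s : ℕ) (x y : EuclideanSpace ℝ (Fin s)) : 0 ≤ phiStd s x y := by
  unfold phiStd
  split_ifs <;> positivity

lemma deltaPhi_nonneg_s11 (s : ℕ) (m x y : EuclideanSpace ℝ (Fin s)) :
    0 ≤ deltaPhi m (phiStd s) x y := by
  unfold deltaPhi
  apply le_min dist_nonneg
  have h1 : 0 ≤ 1 / (1 + dist m x) := by positivity
  have h2 : 0 ≤ 1 / (1 + dist m y) := by positivity
  have h3 := phiStd_nonneg s x y
  linarith

/-- For every unit vector x, the sequence (aᵢ • x) is Cauchy in (ℝˢ, d^φ). -/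
theorem stmt11 (s : ℕ) (hs : 2 ≤ s) (x : EuclideanSpace ℝ (Fin s)) (hx : ‖x‖ = 1) :
    ∀ ε > (0 : ℝ), ∃ N : ℕ, ∀ i ≥ N, ∀ j ≥ N,
      dPhi (0 : EuclideanSpace ℝ (Fin s)) (phiStd s) (harm i • x) (harm j • x) < ε := by

  intro ε hε
  obtain ⟨N0, hN0⟩ := Filter.eventually_atTop.mp
    (Real.tendsto_sum_range_one_div_nat_succ_atTop.eventually_ge_atTop (2 / ε))
  refine ⟨max N0 1, fun i hi j hj => ?_⟩
  have hi1 : 1 ≤ i := le_trans (le_max_right _ _) hi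
  have hj1 : 1 ≤ j := le_trans (le_max_right _ _) hj
  have hhi : 2 / ε ≤ harm i := hN0 i (le_trans (le_max_left _ _) hi)
  have hhj : 2 / ε ≤ harm j := hN0 j (le_trans (le_max_left _ _) hj)
  set a : EuclideanSpace ℝ (Fin s) := harm i • x with ha
  set b : EuclideanSpace ℝ (Fin s) := harm j • x with hb
  -- the set defining dPhi
  set S : Set ℝ := { r : ℝ | ∃ (n : ℕ) (f : ℕ → EuclideanSpace ℝ (Fin s)), 1 ≤ n ∧ f 0 = a ∧
      f n = b ∧ r = ∑ k ∈ Finset.range n, deltaPhi 0 (phiStd s) (f k) (f (k + 1)) } with hS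
  have hbdd : BddBelow S := by
    refine ⟨0, fun r hr => ?_⟩
    obtain ⟨n, f, _, _, _, hr⟩ := hr
    rw [hr]
    exact Finset.sum_nonneg fun k _ => deltaPhi_nonneg_s11 s _ _ _
  have hmem : deltaPhi 0 (phiStd s) a b ∈ S := by
    refine ⟨1, fun n => if n = 0 then a else b, le_refl 1, by simp, by simp, ?_⟩
    simp [Finset.sum_range_one]
  have hle : dPhi 0 (phiStd s) a b ≤ deltaPhi 0 (phiStd s) a b := csInf_le hbdd hmem
  have hphi : phiStd s a b = 0 := by
    unfold phiStd
    rw [if_pos]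
    refine ⟨i, j, hi1, hj1, ?_⟩
    rw [ha, hb, smul_smul, div_mul_cancel₀ _ (ne_of_gt (harm_pos hi1))]
  have hda : dist (0 : EuclideanSpace ℝ (Fin s)) a = harm i := by
    rw [dist_comm, dist_zero_right, ha, norm_smul, hx, Real.norm_eq_abs,
      abs_of_nonneg (harm_nonneg i), mul_one]
  have hdb : dist (0 : EuclideanSpace ℝ (Fin s)) b = harm j := by
    rw [dist_comm, dist_zero_right, hb, norm_smul, hx, Real.norm_eq_abs,
      abs_of_nonneg (harm_nonneg j), mul_one]
  have hdelta : deltaPhi 0 (phiStd s) a b ≤ 1 / (1 + harm i) + 1 / (1 + harm j) := by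
    unfold deltaPhi
    rw [hda, hdb, hphi]
    exact le_trans (min_le_right _ _) (by linarith)
  have hip : 0 < harm i := harm_pos hi1
  have hjp : 0 < harm j := harm_pos hj1
  have h2i : 2 ≤ harm i * ε := (div_le_iff₀ hε).mp hhi
  have h2j : 2 ≤ harm j * ε := (div_le_iff₀ hε).mp hhj
  have e1 : 1 / (1 + harm i) < ε / 2 := by
    rw [div_lt_div_iff₀ (by linarith) two_pos]
    nlinarith
  have e2 : 1 / (1 + harm j) < ε / 2 := by
    rw [div_lt_div_iff₀ (by linarith) two_pos]
    nlinarith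
  calc dPhi 0 (phiStd s) a b ≤ 1 / (1 + harm i) + 1 / (1 + harm j) := le_trans hle hdelta
    _ < ε := by linarith
end

section
/- For distinct unit vectors x, y ∈ S¹ ⊂ ℝˢ (s ≥ 2), the rays L_x and L_y defined by the bending construction with parameter δ ∈ (0, π/4) satisfy d_E(L_x, L_y) ≥ (1/(2√2))·d_E(x, y), where d_E(A,B) = inf{|a−b| : a ∈ A, b ∈ B}. -/
-- The first standard basis vector a₁ = (1,0,…,0) of ℝˢ.
noncomputable def e1 (s : ℕ) : EuclideanSpace ℝ (Fin s) :=
  if h : 0 < s then EuclideanSpace.single (⟨0, h⟩ : Fin s) 1 else 0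

-- The direction of the bent ray L_x (bending construction with parameter δ):
-- a₁ if ∠(x,a₁) ≤ δ; −a₁ if ∠(x,−a₁) ≤ δ; otherwise the unit vector in
-- span{a₁, x}, on the same side of the a₁-axis as x, making angle
-- θ = (π/(π−2δ))(∠(x,a₁) − δ) with a₁.
open Classical in
noncomputable def rayDir (s : ℕ) (δ : ℝ) (x : EuclideanSpace ℝ (Fin s)) :
    EuclideanSpace ℝ (Fin s) :=
  if InnerProductGeometry.angle x (e1 s) ≤ δ then e1 s
  else if InnerProductGeometry.angle x (-(e1 s)) ≤ δ then -(e1 s)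
  else
    Real.cos ((Real.pi / (Real.pi - 2 * δ)) * (InnerProductGeometry.angle x (e1 s) - δ)) • e1 s
      + Real.sin ((Real.pi / (Real.pi - 2 * δ)) * (InnerProductGeometry.angle x (e1 s) - δ)) •
        (‖x - (inner ℝ x (e1 s) : ℝ) • e1 s‖⁻¹ • (x - (inner ℝ x (e1 s) : ℝ) • e1 s))

-- The ray L_x starting at the unit vector x, from the bending construction.
def ray (s : ℕ) (δ : ℝ) (x : EuclideanSpace ℝ (Fin s)) : Set (EuclideanSpace ℝ (Fin s)) :=
  { y | ∃ t : ℝ, 0 ≤ t ∧ y = x + t • rayDir s δ x }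

-- d_E(A,B) = inf{|a−b| : a ∈ A, b ∈ B}.
noncomputable def setDist {E : Type*} [MetricSpace E] (A B : Set E) : ℝ :=
  sInf { r : ℝ | ∃ a ∈ A, ∃ b ∈ B, r = dist a b }


section AuxStmt16

open Real


/-- The bent direction angle, as a function of the polar angle A. -/
noncomputable def Th (δ A : ℝ) : ℝ :=
  min Real.pi (max 0 ((Real.pi / (Real.pi - 2*δ)) * (A - δ)))

lemma th_nonneg (δ A : ℝ) : 0 ≤ Th δ A :=
  le_min pi_nonneg (le_max_left _ _)

lemma th_le_pi (δ A : ℝ) : Th δ A ≤ π := min_le_left _ _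

lemma th_mono {δ : ℝ} (hδ0 : 0 < δ) (hδ : δ < π/4) {A B : ℝ} (h : A ≤ B) :
    Th δ A ≤ Th δ B := by
  have hπ := pi_pos
  have hd : 0 < π - 2*δ := by linarith
  have hk : 0 ≤ π / (π - 2*δ) := div_nonneg pi_nonneg hd.le
  exact min_le_min le_rfl (max_le_max le_rfl (by nlinarith))

lemma th_close {δ : ℝ} (hδ0 : 0 < δ) (hδ : δ < π/4) {A : ℝ}
    (hA0 : 0 ≤ A) (hA1 : A ≤ π) : |Th δ A - A| ≤ δ := by
  have hπ := pi_pos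
  have hd : 0 < π - 2*δ := by linarith
  have hk1 : (1:ℝ) ≤ π / (π - 2*δ) := (one_le_div hd).2 (by linarith)
  rw [abs_le]
  unfold Th
  rcases le_or_gt ((π / (π - 2*δ)) * (A - δ)) 0 with h0 | h0
  · rw [max_eq_left h0, min_eq_right pi_nonneg]
    have hAδ : A ≤ δ := by nlinarith
    constructor <;> linarith
  · rw [max_eq_right h0.le]
    have hAδ : δ < A := by nlinarith
    rcases le_or_gt π ((π / (π - 2*δ)) * (A - δ)) with h1 | h1
    · rw [min_eq_left h1]
      have h1' : π * (π - 2*δ) ≤ π * (A - δ) := by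
        rw [div_mul_eq_mul_div, le_div_iff₀ hd] at h1; linarith
      have h2' : π - 2*δ ≤ A - δ := le_of_mul_le_mul_left h1' hπ
      constructor <;> linarith
    · rw [min_eq_right h1.le]
      have h1' : π * (A - δ) < π * (π - 2*δ) := by
        rw [div_mul_eq_mul_div, div_lt_iff₀ hd] at h1; linarith
      have h2' : A - δ < π - 2*δ := lt_of_mul_lt_mul_left h1' pi_nonneg
      have key : π * (A - δ) ≤ (A + δ) * (π - 2*δ) := by nlinarith
      have upper : (π / (π - 2*δ)) * (A - δ) ≤ A + δ := by
        rw [div_mul_eq_mul_div, div_le_iff₀ hd]; linarith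
      have lower : A - δ ≤ (π / (π - 2*δ)) * (A - δ) := by nlinarith
      constructor <;> linarith

set_option maxHeartbeats 1000000 in
/-- The planar separation lemma. -/
lemma twoD (δ A B θa θb t s : ℝ) (hδ0 : 0 < δ) (hδ : δ < π/4)
    (hAB : A ≤ B) (hBA : B - A ≤ 2*π) (hθ : θa ≤ θb) (hθ2 : θb - θa ≤ 2*π)
    (ha : |θa - A| ≤ δ) (hb : |θb - B| ≤ δ) (ht : 0 ≤ t) (hs : 0 ≤ s) :
    (1/8) * ((cos A - cos B)^2 + (sin A - sin B)^2)
      ≤ (cos A + t*cos θa - (cos B + s*cos θb))^2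
        + (sin A + t*sin θa - (sin B + s*sin θb))^2 := by
  have hπ := pi_pos
  rw [abs_le] at ha hb
  obtain ⟨a, hadef⟩ : ∃ a, a = cos A + t*cos θa - (cos B + s*cos θb) := ⟨_, rfl⟩
  obtain ⟨b, hbdef⟩ : ∃ b, b = sin A + t*sin θa - (sin B + s*sin θb) := ⟨_, rfl⟩
  obtain ⟨μ, hμ⟩ : ∃ μ : ℝ, μ = (θa + θb)/2 := ⟨_, rfl⟩
  rw [← hadef, ← hbdef]
  have hsinh : 0 ≤ sin ((B-A)/2) :=
    sin_nonneg_of_nonneg_of_le_pi (by linarith) (by linarith)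
  have hsinν : 0 ≤ sin ((θb-θa)/2) :=
    sin_nonneg_of_nonneg_of_le_pi (by linarith) (by linarith)
  have hmμ : |(A+B)/2 - μ| ≤ π/4 := by
    rw [abs_le, hμ]; constructor <;> [linarith; linarith]
  have hcos : sqrt 2 / 2 ≤ cos ((A+B)/2 - μ) := by
    have h1 : cos (π/4) ≤ cos |(A+B)/2 - μ| :=
      cos_le_cos_of_nonneg_of_le_pi (abs_nonneg _) (by linarith) hmμ
    rw [cos_abs, cos_pi_div_four] at h1; linarith
  have hI : a * sin μ - b * cos μ
      = (sin (B - μ) - sin (A - μ)) + t * sin (μ - θa) + s * sin (θb - μ) := by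
    rw [hadef, hbdef, sin_sub, sin_sub, sin_sub, sin_sub]; ring
  have hν1 : μ - θa = (θb - θa)/2 := by rw [hμ]; ring
  have hν2 : θb - μ = (θb - θa)/2 := by rw [hμ]; ring
  have hBμ : sin (B - μ) - sin (A - μ) = 2 * sin ((B-A)/2) * cos ((A+B)/2 - μ) := by
    have k1 := sin_add ((A+B)/2 - μ) ((B-A)/2)
    have k2 := sin_sub ((A+B)/2 - μ) ((B-A)/2)
    have e1 : (A+B)/2 - μ + (B-A)/2 = B - μ := by ring
    have e2 : (A+B)/2 - μ - (B-A)/2 = A - μ := by ring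
    rw [e1] at k1; rw [e2] at k2; linarith
  rw [hν1, hν2, hBμ] at hI
  have hI2 : sqrt 2 * sin ((B-A)/2) ≤ a * sin μ - b * cos μ := by
    have h6 : 2 * sin ((B-A)/2) * (sqrt 2/2) ≤ 2 * sin ((B-A)/2) * cos ((A+B)/2 - μ) :=
      mul_le_mul_of_nonneg_left hcos (by linarith)
    nlinarith [mul_nonneg ht hsinν, mul_nonneg hs hsinν]
  have hInn : 0 ≤ a * sin μ - b * cos μ :=
    le_trans (mul_nonneg (sqrt_nonneg 2) hsinh) hI2
  have hCS : (a * sin μ - b * cos μ)^2 ≤ a^2 + b^2 := by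
    nlinarith [sq_nonneg (a * cos μ + b * sin μ), sin_sq_add_cos_sq μ]
  have hRHS : (cos A - cos B)^2 + (sin A - sin B)^2 = 4 * sin ((B-A)/2)^2 := by
    have h7 : cos (B - A) = cos B * cos A + sin B * sin A := cos_sub B A
    have h8 : cos (B - A) = 1 - 2 * sin ((B-A)/2)^2 := by
      have e3 : (2:ℝ)*((B-A)/2) = B - A := by ring
      have h8' := cos_two_mul ((B-A)/2)
      rw [e3] at h8'
      have := sin_sq_add_cos_sq ((B-A)/2); linarith
    linear_combination (sin_sq_add_cos_sq A) + (sin_sq_add_cos_sq B) + 2*h7 - 2*h8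
  have hIsq : 2 * sin ((B-A)/2)^2 ≤ (a * sin μ - b * cos μ)^2 := by
    have h9 : (sqrt 2 * sin ((B-A)/2)) * (sqrt 2 * sin ((B-A)/2))
        ≤ (a * sin μ - b * cos μ) * (a * sin μ - b * cos μ) :=
      mul_le_mul hI2 hI2 (mul_nonneg (sqrt_nonneg 2) hsinh) hInn
    have h10 : sqrt 2 * sqrt 2 = 2 := mul_self_sqrt (by norm_num)
    nlinarith [h9, h10]
  rw [hRHS]
  linarith [hCS, hIsq, sq_nonneg (sin ((B-A)/2))]

set_option maxHeartbeats 1000000 in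
/-- Core algebraic inequality in coordinates. -/
lemma core (δ A B t s c : ℝ) (hδ0 : 0 < δ) (hδ : δ < π/4)
    (hA0 : 0 ≤ A) (hA1 : A ≤ π) (hB0 : 0 ≤ B) (hB1 : B ≤ π)
    (ht : 0 ≤ t) (hs : 0 ≤ s) (hc : |c| ≤ 1) :
    (1/8) * ((cos A - cos B)^2 + (sin A)^2 + (sin B)^2 - 2*c*(sin A)*(sin B))
      ≤ (cos A + t*cos (Th δ A) - (cos B + s*cos (Th δ B)))^2
        + (sin A + t*sin (Th δ A))^2 + (sin B + s*sin (Th δ B))^2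
        - 2*c*(sin A + t*sin (Th δ A))*(sin B + s*sin (Th δ B)) := by
  have hπ := pi_pos
  rw [abs_le] at hc
  have hG1 : (1/8) * ((cos A - cos B)^2 + (sin A - sin B)^2)
      ≤ (cos A + t*cos (Th δ A) - (cos B + s*cos (Th δ B)))^2
        + ((sin A + t*sin (Th δ A)) - (sin B + s*sin (Th δ B)))^2 := by
    rcases le_total A B with hab | hab
    · exact twoD δ A B (Th δ A) (Th δ B) t s hδ0 hδ hab (by linarith)
        (th_mono hδ0 hδ hab) (by linarith [th_nonneg δ A, th_le_pi δ B])
        (th_close hδ0 hδ hA0 hA1) (th_close hδ0 hδ hB0 hB1) ht hs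
    · have h := twoD δ B A (Th δ B) (Th δ A) s t hδ0 hδ hab (by linarith)
        (th_mono hδ0 hδ hab) (by linarith [th_nonneg δ B, th_le_pi δ A])
        (th_close hδ0 hδ hB0 hB1) (th_close hδ0 hδ hA0 hA1) hs ht
      nlinarith [h]
  have hG2 : (1/8) * ((cos A - cos B)^2 + (sin A + sin B)^2)
      ≤ (cos A + t*cos (Th δ A) - (cos B + s*cos (Th δ B)))^2
        + ((sin A + t*sin (Th δ A)) + (sin B + s*sin (Th δ B)))^2 := by
    have habs : |(-(Th δ B)) - (-B)| ≤ δ := by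
      have : (-(Th δ B)) - (-B) = -(Th δ B - B) := by ring
      rw [this, abs_neg]; exact th_close hδ0 hδ hB0 hB1
    have h := twoD δ (-B) A (-(Th δ B)) (Th δ A) s t hδ0 hδ (by linarith) (by linarith)
        (by linarith [th_nonneg δ B, th_nonneg δ A]) (by linarith [th_le_pi δ A, th_le_pi δ B])
        habs (th_close hδ0 hδ hA0 hA1) hs ht
    simp only [cos_neg, sin_neg] at h
    nlinarith [h]
  nlinarith [mul_nonneg (by linarith : (0:ℝ) ≤ 1 + c)
      (sub_nonneg.2 hG1), mul_nonneg (by linarith : (0:ℝ) ≤ 1 - c) (sub_nonneg.2 hG2)]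

lemma th_eq_zero {δ A : ℝ} (hδ0 : 0 < δ) (hδ : δ < π/4) (h : A ≤ δ) : Th δ A = 0 := by
  have hπ := pi_pos
  have hd : 0 < π - 2*δ := by linarith
  have hk : 0 ≤ π/(π - 2*δ) := div_nonneg pi_nonneg hd.le
  have hm : (π/(π - 2*δ)) * (A - δ) ≤ 0 := by nlinarith
  unfold Th
  rw [max_eq_left hm, min_eq_right pi_nonneg]

lemma th_eq_pi {δ A : ℝ} (hδ0 : 0 < δ) (hδ : δ < π/4) (h : π - δ ≤ A) : Th δ A = π := by
  have hπ := pi_pos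
  have hd : 0 < π - 2*δ := by linarith
  have hk : 0 ≤ π/(π - 2*δ) := div_nonneg pi_nonneg hd.le
  have hcancel : (π/(π - 2*δ)) * (π - 2*δ) = π := div_mul_cancel₀ _ hd.ne'
  have hm : π ≤ (π/(π - 2*δ)) * (A - δ) := by
    calc π = (π/(π - 2*δ)) * (π - 2*δ) := hcancel.symm
    _ ≤ (π/(π - 2*δ)) * (A - δ) := mul_le_mul_of_nonneg_left (by linarith) hk
  unfold Th
  rw [max_eq_right (le_trans pi_nonneg hm), min_eq_left hm]

lemma th_eq_mid {δ A : ℝ} (hδ0 : 0 < δ) (hδ : δ < π/4) (h1 : δ ≤ A) (h2 : A ≤ π - δ) :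
    Th δ A = (π/(π - 2*δ)) * (A - δ) := by
  have hπ := pi_pos
  have hd : 0 < π - 2*δ := by linarith
  have hk : 0 ≤ π/(π - 2*δ) := div_nonneg pi_nonneg hd.le
  have hcancel : (π/(π - 2*δ)) * (π - 2*δ) = π := div_mul_cancel₀ _ hd.ne'
  have hm : (π/(π - 2*δ)) * (A - δ) ≤ π := by
    calc (π/(π - 2*δ)) * (A - δ) ≤ (π/(π - 2*δ)) * (π - 2*δ) :=
          mul_le_mul_of_nonneg_left (by linarith) hk
    _ = π := hcancel
  unfold Th
  rw [max_eq_right (mul_nonneg hk (by linarith)), min_eq_right hm]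

lemma e1_norm {s : ℕ} (hs0 : 0 < s) : ‖e1 s‖ = 1 := by
  rw [e1, dif_pos hs0, EuclideanSpace.norm_single]; norm_num

lemma norm_comb {F : Type*} [NormedAddCommGroup F] [InnerProductSpace ℝ F]
    (e w w' : F) (he : ‖e‖ = 1) (hw : ‖w‖ = 1) (hw' : ‖w'‖ = 1)
    (hew : (inner ℝ e w : ℝ) = 0) (hew' : (inner ℝ e w' : ℝ) = 0)
    (α β γ η : ℝ) :
    ‖(α • e + β • w) - (γ • e + η • w')‖^2
      = (α - γ)^2 + β^2 + η^2 - 2*(inner ℝ w w' : ℝ)*β*η := by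
  have h1 : (inner ℝ e e : ℝ) = 1 := by rw [real_inner_self_eq_norm_sq, he]; norm_num
  have h2 : (inner ℝ w w : ℝ) = 1 := by rw [real_inner_self_eq_norm_sq, hw]; norm_num
  have h3 : (inner ℝ w' w' : ℝ) = 1 := by rw [real_inner_self_eq_norm_sq, hw']; norm_num
  have h4 : (inner ℝ w e : ℝ) = 0 := by rw [real_inner_comm]; exact hew
  have h5 : (inner ℝ w' e : ℝ) = 0 := by rw [real_inner_comm]; exact hew'
  have h6 : (inner ℝ w' w : ℝ) = (inner ℝ w w' : ℝ) := real_inner_comm _ _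
  rw [← real_inner_self_eq_norm_sq]
  simp only [inner_sub_left, inner_sub_right, inner_add_left, inner_add_right,
    real_inner_smul_left, real_inner_smul_right, h1, h2, h3, h4, h5, h6, hew, hew']
  ring

lemma decomp (s : ℕ) (hs : 2 ≤ s) (δ : ℝ) (hδ0 : 0 < δ) (hδ : δ < π/4)
    (z : EuclideanSpace ℝ (Fin s)) (hz : ‖z‖ = 1) :
    ∃ A : ℝ, ∃ w : EuclideanSpace ℝ (Fin s), 0 ≤ A ∧ A ≤ π ∧ ‖w‖ = 1 ∧
      (inner ℝ (e1 s) w : ℝ) = 0 ∧ z = cos A • e1 s + sin A • w ∧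
      rayDir s δ z = cos (Th δ A) • e1 s + sin (Th δ A) • w := by
  have hπ := pi_pos
  have hs0 : 0 < s := by omega
  have hE : ‖e1 s‖ = 1 := e1_norm hs0
  set A := InnerProductGeometry.angle z (e1 s) with hAdef
  have hA0 : 0 ≤ A := InnerProductGeometry.angle_nonneg z (e1 s)
  have hA1 : A ≤ π := InnerProductGeometry.angle_le_pi z (e1 s)
  have hcosA : cos A = (inner ℝ z (e1 s) : ℝ) := by
    rw [hAdef, InnerProductGeometry.cos_angle, hz, hE]; norm_num
  have hsinA : 0 ≤ sin A := sin_nonneg_of_nonneg_of_le_pi hA0 hA1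
  have h1 : (inner ℝ (e1 s) (e1 s) : ℝ) = 1 := by
    rw [real_inner_self_eq_norm_sq, hE]; norm_num
  have hzz : (inner ℝ z z : ℝ) = 1 := by
    rw [real_inner_self_eq_norm_sq, hz]; norm_num
  set v := z - (inner ℝ z (e1 s) : ℝ) • e1 s with hv
  have hvE : (inner ℝ (e1 s) v : ℝ) = 0 := by
    rw [hv, inner_sub_right, real_inner_smul_right, h1, real_inner_comm (e1 s) z]; ring
  have hvnorm : ‖v‖ = sin A := by
    have h3 : ‖v‖^2 = 1 - cos A^2 := by
      rw [← real_inner_self_eq_norm_sq, hv]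
      simp only [inner_sub_left, inner_sub_right, real_inner_smul_left,
        real_inner_smul_right, h1, hzz]
      have hcosA' : cos A = (inner ℝ (e1 s) z : ℝ) := by rw [hcosA, real_inner_comm]
      rw [← hcosA', ← hcosA]; ring
    have h4 : sin A^2 = 1 - cos A^2 := by
      have := sin_sq_add_cos_sq A; linarith
    have h5 : (‖v‖ - sin A) * (‖v‖ + sin A) = 0 := by linear_combination h3 - h4
    rcases mul_eq_zero.1 h5 with h | h
    · linarith
    · have := norm_nonneg v; linarith
  by_cases hv0 : v = 0
  · -- degenerate case : z = ± e1
    have hsin0 : sin A = 0 := by rw [← hvnorm, hv0, norm_zero]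
    have hzE : z = cos A • e1 s := by
      have h6 := hv0
      rw [hv, sub_eq_zero] at h6
      rw [h6, hcosA]
    have hA01 : A = 0 ∨ A = π := by
      rcases eq_or_lt_of_le hA1 with h | h
      · right; exact h
      · left
        by_contra h0
        have : 0 < A := lt_of_le_of_ne hA0 (Ne.symm h0)
        have := sin_pos_of_pos_of_lt_pi this h
        linarith
    refine ⟨A, EuclideanSpace.single (⟨1, by omega⟩ : Fin s) 1, hA0, hA1, ?_, ?_, ?_, ?_⟩
    · rw [EuclideanSpace.norm_single]; norm_num
    · rw [e1, dif_pos hs0, EuclideanSpace.inner_single_left]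
      simp [EuclideanSpace.single_apply]
    · rw [hsin0, zero_smul, add_zero]; exact hzE
    · rcases hA01 with h | h
      · -- A = 0
        simp only [rayDir]
        rw [if_pos (by rw [← hAdef, h]; linarith)]
        rw [h, th_eq_zero hδ0 hδ (by linarith)]
        simp
      · -- A = π
        simp only [rayDir]
        rw [if_neg (by rw [← hAdef, h]; intro hcon; linarith)]
        rw [if_pos (by rw [InnerProductGeometry.angle_neg_right, ← hAdef, h]; simp; linarith)]
        rw [h, th_eq_pi hδ0 hδ (by linarith)]
        simp
  · -- nondegenerate case
    have hvn : ‖v‖ ≠ 0 := norm_ne_zero_iff.2 hv0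
    have hvpos : 0 < ‖v‖ := lt_of_le_of_ne (norm_nonneg v) (Ne.symm hvn)
    have hsinpos : 0 < sin A := by rw [← hvnorm]; exact hvpos
    refine ⟨A, ‖v‖⁻¹ • v, hA0, hA1, ?_, ?_, ?_, ?_⟩
    · rw [norm_smul, norm_inv, norm_norm, inv_mul_cancel₀ hvn]
    · rw [real_inner_smul_right, hvE]; ring
    · rw [smul_smul]
      rw [show sin A * ‖v‖⁻¹ = 1 by rw [← hvnorm]; exact mul_inv_cancel₀ hvn]
      rw [one_smul, hcosA, hv]
      abel
    · simp only [rayDir]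
      split_ifs with hc1 hc2
      · rw [← hAdef] at hc1
        rw [th_eq_zero hδ0 hδ hc1]
        simp
      · rw [InnerProductGeometry.angle_neg_right, ← hAdef] at hc2
        rw [th_eq_pi hδ0 hδ (by linarith)]
        simp
      · rw [← hAdef] at hc1
        rw [InnerProductGeometry.angle_neg_right, ← hAdef] at hc2
        push_neg at hc1 hc2
        rw [← hAdef, ← hv, th_eq_mid hδ0 hδ (le_of_lt hc1) (by linarith)]


end AuxStmt16

set_option maxHeartbeats 1000000 in
/-- For distinct unit vectors x, y, the rays L_x and L_y satisfy
d_E(L_x, L_y) ≥ (1/(2√2)) d_E(x,y). -/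
theorem stmt16 (s : ℕ) (hs : 2 ≤ s) (δ : ℝ) (hδ0 : 0 < δ) (hδ : δ < Real.pi / 4)
    (x y : EuclideanSpace ℝ (Fin s)) (hx : ‖x‖ = 1) (hy : ‖y‖ = 1) (hxy : x ≠ y) :
    setDist (ray s δ x) (ray s δ y) ≥ (1 / (2 * Real.sqrt 2)) * dist x y := by
  have hπ := Real.pi_pos
  obtain ⟨A, wx, hA0, hA1, hwx, hEwx, hxdec, hxdir⟩ := decomp s hs δ hδ0 hδ x hx
  obtain ⟨B, wy, hB0, hB1, hwy, hEwy, hydec, hydir⟩ := decomp s hs δ hδ0 hδ y hy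
  have hs0 : 0 < s := by omega
  have hE : ‖e1 s‖ = 1 := e1_norm hs0
  have hc : |(inner ℝ wx wy : ℝ)| ≤ 1 := by
    have h := abs_real_inner_le_norm wx wy
    rw [hwx, hwy] at h; simpa using h
  have key : ∀ t u : ℝ, 0 ≤ t → 0 ≤ u →
      (1 / (2 * Real.sqrt 2)) * dist x y
        ≤ dist (x + t • rayDir s δ x) (y + u • rayDir s δ y) := by
    intro t u ht hu
    have hp : x + t • rayDir s δ x
        = (Real.cos A + t*Real.cos (Th δ A)) • e1 s
          + (Real.sin A + t*Real.sin (Th δ A)) • wx := by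
      rw [hxdir]; rw [hxdec]; module
    have hq : y + u • rayDir s δ y
        = (Real.cos B + u*Real.cos (Th δ B)) • e1 s
          + (Real.sin B + u*Real.sin (Th δ B)) • wy := by
      rw [hydir]; rw [hydec]; module
    have hd2 : dist (x + t • rayDir s δ x) (y + u • rayDir s δ y) ^ 2
        = (Real.cos A + t*Real.cos (Th δ A) - (Real.cos B + u*Real.cos (Th δ B)))^2
          + (Real.sin A + t*Real.sin (Th δ A))^2 + (Real.sin B + u*Real.sin (Th δ B))^2
          - 2*(inner ℝ wx wy : ℝ)*(Real.sin A + t*Real.sin (Th δ A))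
            *(Real.sin B + u*Real.sin (Th δ B)) := by
      rw [dist_eq_norm, hp, hq]
      exact norm_comb (e1 s) wx wy hE hwx hwy hEwx hEwy _ _ _ _
    have hd0 : dist x y ^ 2
        = (Real.cos A - Real.cos B)^2 + (Real.sin A)^2 + (Real.sin B)^2
          - 2*(inner ℝ wx wy : ℝ)*(Real.sin A)*(Real.sin B) := by
      rw [dist_eq_norm, hxdec, hydec]
      exact norm_comb (e1 s) wx wy hE hwx hwy hEwx hEwy _ _ _ _
    have hcore := core δ A B t u (inner ℝ wx wy) hδ0 hδ hA0 hA1 hB0 hB1 ht hu hc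
    rw [← hd0, ← hd2] at hcore
    obtain ⟨d, hd⟩ : ∃ d, d = dist x y := ⟨_, rfl⟩
    obtain ⟨D, hD⟩ : ∃ D, D = dist (x + t • rayDir s δ x) (y + u • rayDir s δ y) := ⟨_, rfl⟩
    rw [← hd, ← hD] at hcore ⊢
    have hdn : (0:ℝ) ≤ d := hd ▸ dist_nonneg
    have hDn : (0:ℝ) ≤ D := hD ▸ dist_nonneg
    have h2 : Real.sqrt 2 * Real.sqrt 2 = 2 := Real.mul_self_sqrt (by norm_num)
    have hs2 : 0 < Real.sqrt 2 := Real.sqrt_pos.2 (by norm_num)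
    rw [show (1 / (2 * Real.sqrt 2)) * d = d / (2 * Real.sqrt 2) by ring,
      div_le_iff₀ (by positivity)]
    have h8D : (D*(2*Real.sqrt 2))^2 = 8*D^2 := by
      have h3 : Real.sqrt 2 ^ 2 = 2 := Real.sq_sqrt (by norm_num)
      linear_combination (4*D^2) * h3
    by_contra hcon
    push_neg at hcon
    have hlt : (D*(2*Real.sqrt 2))^2 < d^2 :=
      pow_lt_pow_left₀ hcon (by positivity) (by norm_num)
    linarith [hcore, h8D, hlt]
  rw [ge_iff_le, setDist]
  apply le_csInf
  · exact ⟨dist x y, x, ⟨0, le_rfl, by simp⟩, y, ⟨0, le_rfl, by simp⟩, rfl⟩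
  · rintro r ⟨p, ⟨t, ht, rfl⟩, q, ⟨u, hu, rfl⟩, rfl⟩
    exact key t u ht hu
end

section
/- Let aₘ = Σₖ₌₁ᵐ 1/k and 0 < δ < π/4. Suppose x ∈ ℝˢ satisfies aₘ ≤ |x| < a_{m+1}, and y is the intersection of the sphere of radius aₘ with the ray in the family L passing through x. Then |y − x| ≤ (1/cos δ)·(1/(m+1)) ≤ √2/(m+1). -/
lemma norm_e1 (s : ℕ) (hs : 0 < s) : ‖e1 s‖ = 1 := by
  rw [e1, dif_pos hs, EuclideanSpace.norm_single, norm_one]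

lemma rayDir_spec (s : ℕ) (hs : 2 ≤ s) (δ : ℝ) (hδ0 : 0 < δ) (hδ : δ < Real.pi / 4)
    (x' : EuclideanSpace ℝ (Fin s)) (hx'' : ‖x'‖ = 1) :
    ‖rayDir s δ x'‖ = 1 ∧ Real.cos δ ≤ (inner ℝ x' (rayDir s δ x') : ℝ) := by
  have hπ := Real.pi_pos
  have hs0 : 0 < s := by omega
  have he1 : ‖e1 s‖ = 1 := norm_e1 s hs0
  have hδπ : δ ≤ Real.pi := by linarith
  rw [rayDir]
  split_ifs with h1 h2
  · refine ⟨he1, ?_⟩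
    have := Real.cos_le_cos_of_nonneg_of_le_pi (InnerProductGeometry.angle_nonneg x' (e1 s)) hδπ h1
    rwa [InnerProductGeometry.cos_angle, hx'', he1, one_mul, div_one] at this
  · refine ⟨by rwa [norm_neg], ?_⟩
    have := Real.cos_le_cos_of_nonneg_of_le_pi (InnerProductGeometry.angle_nonneg x' (-(e1 s))) hδπ h2
    rwa [InnerProductGeometry.cos_angle, hx'', norm_neg, he1, one_mul, div_one] at this
  · push_neg at h1 h2
    rw [InnerProductGeometry.angle_neg_right] at h2
    set α := InnerProductGeometry.angle x' (e1 s) with hα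
    have hα0 : 0 < α := lt_trans hδ0 h1
    have hαπ : α < Real.pi := by linarith
    set c : ℝ := (inner ℝ x' (e1 s) : ℝ) with hc
    have hcα : Real.cos α = c := by
      rw [InnerProductGeometry.cos_angle, hx'', he1, one_mul, div_one]
    set w₀ := x' - c • e1 s with hw₀
    have hee : (inner ℝ (e1 s) (e1 s) : ℝ) = 1 := by
      rw [real_inner_self_eq_norm_sq, he1]; norm_num
    have hiw₀ : (inner ℝ (e1 s) w₀ : ℝ) = 0 := by
      rw [hw₀, inner_sub_right, real_inner_smul_right, hee, real_inner_comm, ← hc]; ring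
    have hxx : (inner ℝ x' x' : ℝ) = 1 := by
      rw [real_inner_self_eq_norm_sq, hx'']; norm_num
    have hxw₀ : (inner ℝ x' w₀ : ℝ) = 1 - c ^ 2 := by
      rw [hw₀, inner_sub_right, real_inner_smul_right, hxx, ← hc]; ring
    have hnw₀sq : ‖w₀‖ ^ 2 = 1 - c ^ 2 := by
      rw [hw₀, norm_sub_sq_real, hx'', real_inner_smul_right, norm_smul, ← hc]
      simp [he1, Real.norm_eq_abs, sq_abs]; ring
    have hsinα : Real.sin α = ‖w₀‖ := by
      have h1 : Real.sin α ^ 2 = ‖w₀‖ ^ 2 := by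
        rw [hnw₀sq, Real.sin_sq, hcα]
      have := Real.sin_nonneg_of_nonneg_of_le_pi (le_of_lt hα0) (le_of_lt hαπ)
      nlinarith [norm_nonneg w₀]
    have hsinpos : 0 < Real.sin α := Real.sin_pos_of_pos_of_lt_pi hα0 hαπ
    have hnw₀ : 0 < ‖w₀‖ := by rwa [← hsinα]
    set θ := Real.pi / (Real.pi - 2 * δ) * (α - δ) with hθ
    set w := ‖w₀‖⁻¹ • w₀ with hw
    have hnw : ‖w‖ = 1 := by
      rw [hw, norm_smul, Real.norm_eq_abs, abs_inv, abs_of_pos hnw₀, inv_mul_cancel₀ hnw₀.ne']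
    have hiw : (inner ℝ (e1 s) w : ℝ) = 0 := by
      rw [hw, real_inner_smul_right, hiw₀, mul_zero]
    have hxw : (inner ℝ x' w : ℝ) = Real.sin α := by
      rw [hw, real_inner_smul_right, hxw₀, ← hcα, ← Real.sin_sq, hsinα,
        sq, ← mul_assoc, inv_mul_cancel₀ hnw₀.ne', one_mul]
    clear_value α c w₀ θ w
    constructor
    · have hdsq : ‖Real.cos θ • e1 s + Real.sin θ • w‖ ^ 2 = 1 := by
        rw [norm_add_sq_real, real_inner_smul_left, real_inner_smul_right, hiw,
          norm_smul, norm_smul, he1, hnw, mul_one, mul_one]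
        simp [Real.norm_eq_abs, sq_abs, Real.cos_sq_add_sin_sq]
      rw [← Real.sqrt_one, ← hdsq, Real.sqrt_sq (norm_nonneg _)]
    · have hinner : (inner ℝ x' (Real.cos θ • e1 s + Real.sin θ • w) : ℝ) = Real.cos (α - θ) := by
        rw [inner_add_right, real_inner_smul_right, real_inner_smul_right, hxw, ← hc,
          ← hcα, Real.cos_sub]; ring
      rw [hinner]
      have hden : 0 < Real.pi - 2 * δ := by linarith
      have heq0 : θ * (Real.pi - 2 * δ) = Real.pi * (α - δ) := by
        rw [hθ, div_mul_eq_mul_div, div_mul_cancel₀ _ hden.ne']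
      have heq : (α - θ) * (Real.pi - 2 * δ) = δ * (Real.pi - 2 * α) := by
        linear_combination -heq0
      have habs : |α - θ| ≤ δ := by
        rw [abs_le]
        constructor
        · nlinarith only [heq, hden, mul_pos hδ0 (show (0:ℝ) < Real.pi - α - δ by linarith)]
        · nlinarith only [heq, hden, mul_pos hδ0 (show (0:ℝ) < α - δ by linarith)]
      calc Real.cos δ ≤ Real.cos |α - θ| :=
            Real.cos_le_cos_of_nonneg_of_le_pi (abs_nonneg _) hδπ habs
        _ = Real.cos (α - θ) := Real.cos_abs _

lemma harm_one_le (m : ℕ) (hm : 1 ≤ m) : 1 ≤ harm m := by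
  have h : harm 1 ≤ harm m := by
    apply Finset.sum_le_sum_of_subset_of_nonneg (Finset.range_subset_range.mpr hm)
    intros; positivity
  simpa [harm] using h

lemma harm_succ (m : ℕ) : harm (m + 1) = harm m + 1 / (m + 1) := by
  rw [harm, harm, Finset.sum_range_succ]

/-- If aₘ ≤ ‖x‖ < a_{m+1} and y is the intersection of the sphere of radius aₘ
with the ray of the family L through x, then |y − x| ≤ (1/cos δ)(1/(m+1)) ≤ √2/(m+1). -/
theorem stmt17 (s : ℕ) (hs : 2 ≤ s) (δ : ℝ) (hδ0 : 0 < δ) (hδ : δ < Real.pi / 4)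
    (m : ℕ) (hm : 1 ≤ m) (x y : EuclideanSpace ℝ (Fin s))
    (hx : harm m ≤ ‖x‖) (hx' : ‖x‖ < harm (m + 1))
    (x' : EuclideanSpace ℝ (Fin s)) (hx'' : ‖x'‖ = 1)
    (hxray : x ∈ ray s δ x') (hyray : y ∈ ray s δ x') (hy : ‖y‖ = harm m) :
    ‖y - x‖ ≤ (1 / Real.cos δ) * (1 / (m + 1)) ∧
    (1 / Real.cos δ) * (1 / (m + 1)) ≤ Real.sqrt 2 / (m + 1) := by
  have hπ := Real.pi_pos
  obtain ⟨t, ht, hxe⟩ := hxray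
  obtain ⟨u, hu, hye⟩ := hyray
  obtain ⟨hd1, hcδ⟩ := rayDir_spec s hs δ hδ0 hδ x' hx''
  set d := rayDir s δ x' with hd
  set c : ℝ := inner ℝ x' d with hc
  clear_value d c
  have hcospos : 0 < Real.cos δ := Real.cos_pos_of_mem_Ioo ⟨by linarith, by linarith⟩
  have hc0 : 0 < c := lt_of_lt_of_le hcospos hcδ
  have hc1 : c ≤ 1 := by
    have := real_inner_le_norm x' d
    rw [hx'', hd1, one_mul] at this
    rwa [hc]
  have hxn : ‖x‖ ^ 2 = 1 + 2 * t * c + t ^ 2 := by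
    rw [hxe, norm_add_sq_real, hx'', real_inner_smul_right, norm_smul, hd1, ← hc,
      Real.norm_eq_abs, abs_of_nonneg ht]
    ring
  have hyn : ‖y‖ ^ 2 = 1 + 2 * u * c + u ^ 2 := by
    rw [hye, norm_add_sq_real, hx'', real_inner_smul_right, norm_smul, hd1, ← hc,
      Real.norm_eq_abs, abs_of_nonneg hu]
    ring
  have harm1 : 1 ≤ harm m := harm_one_le m hm
  have hnormy : ‖y‖ ≤ ‖x‖ := by rw [hy]; exact hx
  have hy1 : 1 ≤ ‖y‖ := by rw [hy]; exact harm1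
  have htu : u ≤ t := by
    by_contra h
    push_neg at h
    have h2 : ‖x‖ ^ 2 < ‖y‖ ^ 2 := by nlinarith only [hxn, hyn, h, hc0, ht, hu]
    nlinarith only [h2, hnormy, norm_nonneg x, norm_nonneg y]
  have hxle : ‖x‖ ≤ 1 + t := by nlinarith only [hxn, norm_nonneg x, hc1, ht]
  have hyle : ‖y‖ ≤ 1 + u := by nlinarith only [hyn, norm_nonneg y, hc1, hu]
  have hyx : y - x = (u - t) • d := by rw [hxe, hye, sub_smul]; abel
  have hnyx : ‖y - x‖ = t - u := by
    rw [hyx, norm_smul, hd1, mul_one, Real.norm_eq_abs, abs_of_nonpos (by linarith), neg_sub]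
  have p3 : (‖x‖ - ‖y‖) * (‖x‖ + ‖y‖) = (t - u) * (2 * c + t + u) := by
    linear_combination hxn - hyn
  have key : (t - u) * c ≤ ‖x‖ - ‖y‖ := by
    have p1 : 0 ≤ (t - u) * c * ((1 + t) + (1 + u) - (‖x‖ + ‖y‖)) := by
      apply mul_nonneg (mul_nonneg (by linarith) hc0.le) (by linarith)
    have p2 : 0 ≤ (t - u) * (t + u) * (1 - c) := by
      apply mul_nonneg (mul_nonneg (by linarith) (by linarith)) (by linarith)
    nlinarith only [p1, p2, p3, hy1, hnormy, htu, hc0]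
  have hgap : ‖x‖ - ‖y‖ < 1 / (m + 1) := by
    rw [hy]
    have := harm_succ m
    linarith
  constructor
  · rw [hnyx, one_div, mul_comm, ← div_eq_mul_inv, le_div_iff₀ hcospos]
    have h1 : (t - u) * Real.cos δ ≤ (t - u) * c :=
      mul_le_mul_of_nonneg_left hcδ (by linarith)
    linarith
  · have hcos2 : Real.sqrt 2 / 2 ≤ Real.cos δ := by
      rw [← Real.cos_pi_div_four]
      exact Real.cos_le_cos_of_nonneg_of_le_pi hδ0.le (by linarith) hδ.le
    have hs2 : (0:ℝ) < Real.sqrt 2 := by positivity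
    have hss : Real.sqrt 2 * Real.sqrt 2 = 2 := Real.mul_self_sqrt (by norm_num)
    have h1 : 1 / Real.cos δ ≤ Real.sqrt 2 := by
      rw [div_le_iff₀ hcospos]
      nlinarith only [hcos2, hss, hs2]
    have hm1 : (0:ℝ) < (m:ℝ) + 1 := by positivity
    rw [div_eq_mul_one_div (Real.sqrt 2)]
    apply mul_le_mul_of_nonneg_right h1 (by positivity)
end
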